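/- Let R be a complete noetherian local ring with maximal ideal 𝔪 and perfect residue field k of characteristic p > 0. Then there exists a unique multiplicative section τ : k → R of the quotient map R → k, i.e. a unique map with τ(xy) = τ(x)τ(y) for all x, y ∈ k and τ(x) mod 𝔪 = x; moreover for any set-theoretic section s : k → R, τ(x) = lim_{n→∞} s(x^{p^{−n}})^{p^n} in the 𝔪-adic topology. -/

import Mathlib

open IsLocalRing

section TeichAux

variable {R : Type*} [CommRing R] [IsLocalRing R] (p : ℕ) [Fact p.Prime]
  [CharP (ResidueField R) p]

private lemma teich_res_sub_mem {a b : R} (h : residue R a = residue R b) :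
    a - b ∈ maximalIdeal R :=
  Ideal.Quotient.eq.mp h

private lemma teich_step {a b : R} (hab : a - b ∈ maximalIdeal R) {J : Ideal R}
    (hJ : a - b ∈ J) : a ^ p - b ^ p ∈ maximalIdeal R * J := by
  rw [← geom_sum₂_mul a b p]
  refine Ideal.mul_mem_mul ?_ hJ
  rw [← Ideal.Quotient.eq_zero_iff_mem]
  have hres : residue R a = residue R b := by
    rw [show (residue R a = residue R b) ↔ _ from Ideal.Quotient.eq]; exact hab
  have : (Ideal.Quotient.mk (maximalIdeal R)) (∑ i ∈ Finset.range p, a ^ i * b ^ (p - 1 - i))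
      = ∑ i ∈ Finset.range p, (residue R b) ^ (p - 1) := by
    rw [map_sum]
    refine Finset.sum_congr rfl fun i hi => ?_
    rw [Finset.mem_range] at hi
    have : (Ideal.Quotient.mk (maximalIdeal R)) (a ^ i * b ^ (p - 1 - i))
        = residue R a ^ i * residue R b ^ (p - 1 - i) := by
      simp [map_mul, map_pow]; rfl
    rw [this, hres, ← pow_add]
    congr 1
    omega
  rw [this, Finset.sum_const, Finset.card_range, nsmul_eq_mul]
  have : (p : ResidueField R) = 0 := CharP.cast_eq_zero _ p
  rw [this, zero_mul]; rfl

private lemma teich_pow_mem {a b : R} (h : residue R a = residue R b) (n : ℕ) :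
    a ^ p ^ n - b ^ p ^ n ∈ maximalIdeal R ^ (n + 1) := by
  induction n with
  | zero => simpa using teich_res_sub_mem h
  | succ n ih =>
    have h1 : a ^ p ^ n - b ^ p ^ n ∈ maximalIdeal R :=
      Ideal.pow_le_self (Nat.succ_ne_zero n) ih
    have := teich_step p h1 ih
    rw [← pow_mul, ← pow_mul, ← pow_succ, ← pow_succ' (maximalIdeal R)] at this
    exact this

end TeichAux

section FrobAux

variable {K : Type*} [Field K] (p : ℕ) [Fact p.Prime] [CharP K p] [PerfectRing K p]

private lemma frob_iter_pow (x : K) (n : ℕ) :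
    ((frobeniusEquiv K p).symm^[n] x) ^ p ^ n = x := by
  induction n generalizing x with
  | zero => simp
  | succ n ih =>
    rw [Function.iterate_succ_apply, pow_succ', pow_mul', ih]
    have : (frobeniusEquiv K p) ((frobeniusEquiv K p).symm x) = x :=
      (frobeniusEquiv K p).apply_symm_apply x
    rw [frobeniusEquiv_apply, frobenius_def] at this
    exact this

private lemma frob_iter_mul (x y : K) (n : ℕ) :
    (frobeniusEquiv K p).symm^[n] (x * y)
      = (frobeniusEquiv K p).symm^[n] x * (frobeniusEquiv K p).symm^[n] y := by
  induction n with
  | zero => simp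
  | succ n ih => rw [Function.iterate_succ_apply', Function.iterate_succ_apply',
      Function.iterate_succ_apply', ih, map_mul]

end FrobAux

section MainAux

variable {R : Type*} [CommRing R] [IsLocalRing R] (p : ℕ) [Fact p.Prime]
  [CharP (ResidueField R) p] [PerfectRing (ResidueField R) p]

/-- A multiplicative map preserves positive powers. -/
private lemma teich_map_pow {τ : ResidueField R → R}
    (hmul : ∀ x y : ResidueField R, τ (x * y) = τ x * τ y) (x : ResidueField R) (m : ℕ) :
    τ (x ^ (m + 1)) = τ x ^ (m + 1) := by
  induction m with
  | zero => simp
  | succ m ih => rw [pow_succ, hmul, ih, ← pow_succ]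

/-- For any multiplicative section `τ` and any set-theoretic section `s`, the `n`-th
approximant agrees with `τ x` modulo `𝔪 ^ (n + 1)`. -/
private lemma teich_conv {τ : ResidueField R → R}
    (hmul : ∀ x y : ResidueField R, τ (x * y) = τ x * τ y)
    (hsec : ∀ x : ResidueField R, residue R (τ x) = x)
    {s : ResidueField R → R} (hs : ∀ x, residue R (s x) = x)
    (x : ResidueField R) (n : ℕ) :
    s (((frobeniusEquiv (ResidueField R) p).symm)^[n] x) ^ p ^ n - τ x ∈
      maximalIdeal R ^ (n + 1) := by
  set y := ((frobeniusEquiv (ResidueField R) p).symm)^[n] x with hy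
  have hpos : p ^ n = (p ^ n - 1) + 1 := by
    have := Nat.one_le_two_pow (n := n)
    have hp : 1 ≤ p := (Fact.out : p.Prime).one_lt.le
    have : 1 ≤ p ^ n := Nat.one_le_pow n p (Fact.out : p.Prime).pos
    omega
  have hτx : τ x = τ y ^ p ^ n := by
    conv_lhs => rw [← frob_iter_pow p x n, ← hy]
    rw [hpos, teich_map_pow hmul]
  rw [hτx]
  exact teich_pow_mem p (by rw [hs, hsec]) n

end MainAux

/-- Let `R` be a complete noetherian local ring with maximal ideal `𝔪` and perfect
residue field `k` of characteristic `p > 0`.  Then there is a unique multiplicative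
section `τ : k → R` of the quotient map `R → k`; moreover, for every set-theoretic
section `s : k → R` and every `x ∈ k` one has `τ x = lim_{n → ∞} s(x^{p^{-n}})^{p^n}`
in the `𝔪`-adic topology (i.e. the difference eventually lies in every power of `𝔪`). -/
theorem exists_unique_teichmuller_section (R : Type*) [CommRing R] [IsLocalRing R]
    [IsNoetherianRing R] [IsAdicComplete (maximalIdeal R) R]
    (p : ℕ) [Fact p.Prime] [CharP (ResidueField R) p] [PerfectRing (ResidueField R) p] :
    (∃! τ : ResidueField R → R,
        (∀ x y : ResidueField R, τ (x * y) = τ x * τ y) ∧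
        (∀ x : ResidueField R, residue R (τ x) = x)) ∧
      (∀ τ : ResidueField R → R,
        (∀ x y : ResidueField R, τ (x * y) = τ x * τ y) →
        (∀ x : ResidueField R, residue R (τ x) = x) →
        ∀ s : ResidueField R → R, (∀ x, residue R (s x) = x) →
          ∀ x : ResidueField R, ∀ m : ℕ, ∃ N : ℕ, ∀ n ≥ N,
            s (((frobeniusEquiv (ResidueField R) p).symm)^[n] x) ^ p ^ n - τ x ∈
              maximalIdeal R ^ m) := by
  have hsmul : ∀ n : ℕ, (maximalIdeal R ^ n • ⊤ : Submodule R R) = maximalIdeal R ^ n := by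
    intro n; simp [smul_eq_mul, Ideal.mul_top]
  have hhaus : ∀ z : R, (∀ n : ℕ, z ∈ maximalIdeal R ^ n) → z = 0 := by
    intro z hz
    refine IsHausdorff.haus (IsAdicComplete.toIsHausdorff (I := maximalIdeal R)) z fun n => ?_
    rw [SModEq.sub_mem, sub_zero, hsmul]
    exact hz n
  -- fix a set-theoretic section
  obtain ⟨s, hs⟩ : ∃ s : ResidueField R → R, ∀ x, residue R (s x) = x := by
    refine ⟨fun x => (Ideal.Quotient.mk_surjective x).choose, fun x => ?_⟩
    exact (Ideal.Quotient.mk_surjective x).choose_spec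
  set φ := (frobeniusEquiv (ResidueField R) p).symm with hφ
  set a : ResidueField R → ℕ → R := fun x n => s (φ^[n] x) ^ p ^ n with ha
  -- Cauchy property
  have hcau : ∀ (x : ResidueField R) {m n : ℕ}, m ≤ n →
      a x m - a x n ∈ maximalIdeal R ^ (m + 1) := by
    intro x m n hmn
    have hsplit : φ^[n] x = φ^[n - m] (φ^[m] x) := by
      rw [← Function.iterate_add_apply]
      congr 1
      omega
    have hres : residue R (s (φ^[m] x)) = residue R (s (φ^[n] x) ^ p ^ (n - m)) := by
      rw [hs, map_pow, hs, hsplit, frob_iter_pow]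
    have h2 : a x n = (s (φ^[n] x) ^ p ^ (n - m)) ^ p ^ m := by
      rw [ha, ← pow_mul, ← pow_add, Nat.sub_add_cancel hmn]
    rw [h2]
    exact teich_pow_mem p hres m
  -- take limits
  have hexists : ∀ x : ResidueField R, ∃ L : R, ∀ n, a x n - L ∈ maximalIdeal R ^ n := by
    intro x
    obtain ⟨L, hL⟩ := IsPrecomplete.prec (IsAdicComplete.toIsPrecomplete (I := maximalIdeal R))
      (f := a x) (fun {m n} hmn => by
        rw [SModEq.sub_mem, hsmul]
        exact Ideal.pow_le_pow_right (Nat.le_succ m) (hcau x hmn))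
    exact ⟨L, fun n => by have := hL n; rwa [SModEq.sub_mem, hsmul] at this⟩
  choose τ hτ using hexists
  -- τ is a section
  have hτsec : ∀ x : ResidueField R, residue R (τ x) = x := by
    intro x
    have h1 := hτ x 1
    have : residue R (a x 1 - τ x) = 0 :=
      Ideal.Quotient.eq_zero_iff_mem.mpr (Ideal.pow_le_self one_ne_zero (by simpa using h1))
    rw [map_sub, sub_eq_zero] at this
    rw [← this, ha]
    simp only [map_pow, hs]
    simp only [Function.iterate_one, pow_one]
    have h2 := (frobeniusEquiv (ResidueField R) p).apply_symm_apply x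
    rw [frobeniusEquiv_apply, frobenius_def] at h2
    exact h2
  -- τ is multiplicative
  have hτmul : ∀ x y : ResidueField R, τ (x * y) = τ x * τ y := by
    intro x y
    have key : ∀ n : ℕ, τ (x * y) - τ x * τ y ∈ maximalIdeal R ^ n := by
      intro n
      have h1 : a (x * y) n - τ (x * y) ∈ maximalIdeal R ^ n := hτ _ n
      have h3 : a x n - τ x ∈ maximalIdeal R ^ n := hτ _ n
      have h4 : a y n - τ y ∈ maximalIdeal R ^ n := hτ _ n
      have h2 : a (x * y) n - a x n * a y n ∈ maximalIdeal R ^ n := by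
        have hres : residue R (s (φ^[n] (x * y)))
            = residue R (s (φ^[n] x) * s (φ^[n] y)) := by
          rw [hs, map_mul, hs, hs]
          exact frob_iter_mul p x y n
        have hmem := teich_pow_mem p hres n
        have heq2 : a (x * y) n - a x n * a y n
            = s (φ^[n] (x * y)) ^ p ^ n - (s (φ^[n] x) * s (φ^[n] y)) ^ p ^ n := by
          rw [ha, mul_pow]
        rw [heq2]
        exact Ideal.pow_le_pow_right (Nat.le_succ n) hmem
      have heq : τ (x * y) - τ x * τ y
          = -(a (x * y) n - τ (x * y)) + (a (x * y) n - a x n * a y n)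
            + (a x n - τ x) * a y n + τ x * (a y n - τ y) := by ring
      rw [heq]
      exact add_mem (add_mem (add_mem (neg_mem h1) h2) (Ideal.mul_mem_right _ _ h3))
        (Ideal.mul_mem_left _ _ h4)
    exact sub_eq_zero.mp (hhaus _ key)
  refine ⟨⟨τ, ⟨hτmul, hτsec⟩, ?_⟩, ?_⟩
  · -- uniqueness
    rintro τ' ⟨hmul', hsec'⟩
    funext x
    have key : ∀ n : ℕ, τ' x - τ x ∈ maximalIdeal R ^ n := by
      intro n
      have h1 := teich_conv p hτmul hτsec hsec' x n
      have h2 : τ' (φ^[n] x) ^ p ^ n = τ' x := by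
        have hpos : p ^ n = (p ^ n - 1) + 1 := by
          have : 1 ≤ p ^ n := Nat.one_le_pow n p (Fact.out : p.Prime).pos
          omega
        rw [hpos, ← teich_map_pow hmul', ← hpos, frob_iter_pow]
      rw [h2] at h1
      exact Ideal.pow_le_pow_right (Nat.le_succ n) h1
    exact sub_eq_zero.mp (hhaus _ key)
  · -- convergence
    intro τ' hmul' hsec' s' hs' x m
    refine ⟨m, fun n hn => ?_⟩
    have h := teich_conv p hmul' hsec' hs' x n
    exact Ideal.pow_le_pow_right (by omega) h
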